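/- arXiv:2102.11702 — 4 statements merged into one kernel-verified Lean document; each statement's English description precedes it below -/
import Mathlib

section
/- For every ε > 0 there exists d₀ such that for every integer d ≥ d₀, setting q = ⌊(2/√3)^d⌋ and N = q^d, there is a corner-free set A ⊆ {0,…,N−1} × {0,…,N−1} with #A ≥ 2^{-(c+ε)·√(log₂ N)} · N², where c = 2·√(2·log₂(4/3)). -/
set_option maxHeartbeats 1000000

open Finset

/-- A set `A ⊆ ℤ²` is corner-free if it contains no corner, i.e. no three points
`(x, y), (x + d, y), (x, y + d)` with `d ≠ 0`. -/
def CornerFreeZ2 (A : Set (ℤ × ℤ)) : Prop :=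
  ∀ x y d : ℤ, d ≠ 0 → ¬((x, y) ∈ A ∧ (x + d, y) ∈ A ∧ (x, y + d) ∈ A)

namespace GreenAux

variable (q d : ℕ)

/-- value of a digit string, base q -/
def dval (x : Fin d → Fin q) : ℕ := ∑ i, (x i : ℕ) * q ^ (i : ℕ)

lemma dval_eq (x : Fin d → Fin q) : dval q d x = (finFunctionFinEquiv x : ℕ) := by
  rw [finFunctionFinEquiv_apply]; rfl

lemma dval_lt (x : Fin d → Fin q) : dval q d x < q ^ d := by
  rw [dval_eq]; exact (finFunctionFinEquiv x).isLt

lemma dval_injective : Function.Injective (dval q d) := by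
  intro a b h
  rw [dval_eq, dval_eq] at h
  exact finFunctionFinEquiv.injective (Fin.val_injective h)

/-- uniqueness of representations with digits in a window [h, h+q) -/
lemma window_unique (h : ℕ) (S T : Fin d → ℕ)
    (hS : ∀ i, h ≤ S i ∧ S i < h + q) (hT : ∀ i, h ≤ T i ∧ T i < h + q)
    (heq : ∑ i, S i * q ^ (i : ℕ) = ∑ i, T i * q ^ (i : ℕ)) : S = T := by
  rcases Nat.eq_zero_or_pos d with hd | hd
  · subst hd; funext i; exact absurd i.2 (by omega)
  have hq : 0 < q := by have := hS ⟨0, hd⟩; omega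
  set s : Fin d → Fin q := fun i => ⟨S i - h, by have := hS i; omega⟩ with hs
  set t : Fin d → Fin q := fun i => ⟨T i - h, by have := hT i; omega⟩ with ht
  have e1 : ∑ i, ((s i : ℕ)) * q ^ (i : ℕ) + ∑ i : Fin d, h * q ^ (i : ℕ)
      = ∑ i, S i * q ^ (i : ℕ) := by
    rw [← Finset.sum_add_distrib]
    refine Finset.sum_congr rfl fun i _ => ?_
    have := hS i
    rw [← Nat.add_mul]
    congr 1
    simp only [hs]
    omega
  have e2 : ∑ i, ((t i : ℕ)) * q ^ (i : ℕ) + ∑ i : Fin d, h * q ^ (i : ℕ)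
      = ∑ i, T i * q ^ (i : ℕ) := by
    rw [← Finset.sum_add_distrib]
    refine Finset.sum_congr rfl fun i _ => ?_
    have := hT i
    rw [← Nat.add_mul]
    congr 1
    simp only [ht]
    omega
  have hvv : dval q d s = dval q d t := by
    unfold dval; omega
  have hst : s = t := dval_injective q d hvv
  funext i
  have hv : (s i : ℕ) = (t i : ℕ) := by rw [hst]
  have h1 := hS i; have h2 := hT i
  simp only [hs, ht] at hv
  omega


/-- the per-coordinate allowed digit pairs: sum in the window [q/2, q/2+q) -/
def good : Finset (Fin q × Fin q) :=
  Finset.univ.filter fun uv => q / 2 ≤ (uv.1 : ℕ) + (uv.2 : ℕ) ∧ (uv.1 : ℕ) + (uv.2 : ℕ) < q / 2 + q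

/-- the squared ℓ² distance between the two digit strings -/
def statZ (g : Fin d → Fin q × Fin q) : ℤ := ∑ i, (((g i).1 : ℤ) - ((g i).2 : ℤ)) ^ 2

lemma statZ_nonneg (g : Fin d → Fin q × Fin q) : 0 ≤ statZ q d g :=
  Finset.sum_nonneg fun i _ => sq_nonneg _

def GreenB (r : ℕ) : Finset (Fin d → Fin q × Fin q) :=
  (Fintype.piFinset fun _ => good q).filter fun g => (statZ q d g).toNat = r

def GreenA (r : ℕ) : Finset (ℤ × ℤ) :=
  (GreenB q d r).image fun g =>
    ((dval q d fun i => (g i).1 : ℤ), (dval q d fun i => (g i).2 : ℤ))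

lemma mem_GreenB {r : ℕ} {g : Fin d → Fin q × Fin q} (hg : g ∈ GreenB q d r) :
    (∀ i, q / 2 ≤ ((g i).1 : ℕ) + ((g i).2 : ℕ) ∧ ((g i).1 : ℕ) + ((g i).2 : ℕ) < q / 2 + q)
    ∧ statZ q d g = (r : ℤ) := by
  rw [GreenB, Finset.mem_filter, Fintype.mem_piFinset] at hg
  constructor
  · intro i
    have := hg.1 i
    rw [good, Finset.mem_filter] at this
    exact this.2
  · rw [← hg.2, Int.toNat_of_nonneg (statZ_nonneg q d g)]

lemma dval_sum_split (x y : Fin d → Fin q) :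
    ∑ i, ((x i : ℕ) + (y i : ℕ)) * q ^ (i : ℕ) = dval q d x + dval q d y := by
  rw [dval, dval, ← Finset.sum_add_distrib]
  exact Finset.sum_congr rfl fun i _ => by rw [Nat.add_mul]

lemma greenA_cornerFree (r : ℕ) : CornerFreeZ2 (GreenA q d r : Set (ℤ × ℤ)) := by
  intro a b δ hδ ⟨h1, h2, h3⟩
  simp only [Finset.coe_image, Set.mem_image, Finset.mem_coe, GreenA, Finset.mem_image,
    Prod.mk.injEq] at h1 h2 h3
  obtain ⟨g1, hg1, hx1, hy1⟩ := h1
  obtain ⟨g2, hg2, hx2, hy2⟩ := h2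
  obtain ⟨g3, hg3, hx3, hy3⟩ := h3
  set x1 : Fin d → Fin q := fun i => (g1 i).1
  set y1 : Fin d → Fin q := fun i => (g1 i).2
  set x2 : Fin d → Fin q := fun i => (g2 i).1
  set y2 : Fin d → Fin q := fun i => (g2 i).2
  set x3 : Fin d → Fin q := fun i => (g3 i).1
  set y3 : Fin d → Fin q := fun i => (g3 i).2
  obtain ⟨hw1, hs1⟩ := mem_GreenB q d hg1
  obtain ⟨hw2, hs2⟩ := mem_GreenB q d hg2
  obtain ⟨hw3, hs3⟩ := mem_GreenB q d hg3
  -- y2 = y1 and x3 = x1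
  have hy21 : y2 = y1 := dval_injective q d (by exact_mod_cast hy2.trans hy1.symm)
  have hx31 : x3 = x1 := dval_injective q d (by exact_mod_cast hx3.trans hx1.symm)
  -- the two digit expansions of a + b + δ agree
  have hST : (fun i => (x2 i : ℕ) + (y1 i : ℕ)) = fun i => (x1 i : ℕ) + (y3 i : ℕ) := by
    apply window_unique q d (q / 2)
    · intro i
      have h := hw2 i
      have e1 : ((g2 i).2 : ℕ) = ((y1 i) : ℕ) := congrArg Fin.val (congrFun hy21 i)
      have e2 : ((g2 i).1 : ℕ) = ((x2 i) : ℕ) := rfl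
      omega
    · intro i
      have h := hw3 i
      have e1 : ((g3 i).1 : ℕ) = ((x1 i) : ℕ) := congrArg Fin.val (congrFun hx31 i)
      have e2 : ((g3 i).2 : ℕ) = ((y3 i) : ℕ) := rfl
      omega
    · rw [dval_sum_split, dval_sum_split]
      have : ((dval q d x2 + dval q d y1 : ℕ) : ℤ) = ((dval q d x1 + dval q d y3 : ℕ) : ℤ) := by
        push_cast
        rw [hx2, hy1, hx1, hy3]
        ring
      exact_mod_cast this
  -- digit-wise difference
  have hdig : ∀ i, (x2 i : ℕ) + (y1 i : ℕ) = (x1 i : ℕ) + (y3 i : ℕ) := fun i =>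
    congrFun hST i
  set e : Fin d → ℤ := fun i => (x2 i : ℤ) - (x1 i : ℤ) with he
  have hy3e : ∀ i, (y3 i : ℤ) = (y1 i : ℤ) + e i := by
    intro i; have := hdig i; simp only [he]; push_cast at this ⊢; omega
  -- sum of squares argument
  have hsum2 : ∑ i, ((x1 i : ℤ) - (y1 i : ℤ) + e i) ^ 2 = ∑ i, ((x1 i : ℤ) - (y1 i : ℤ)) ^ 2 := by
    have : statZ q d g2 = ∑ i, ((x1 i : ℤ) - (y1 i : ℤ) + e i) ^ 2 := by
      rw [statZ]
      refine Finset.sum_congr rfl fun i _ => ?_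
      have : (y2 i : ℤ) = (y1 i : ℤ) := by rw [hy21]
      rw [show ((g2 i).1 : ℤ) = (x2 i : ℤ) from rfl, show ((g2 i).2 : ℤ) = (y2 i : ℤ) from rfl,
        this]
      simp only [he]; ring
    rw [← this, hs2, ← hs1, statZ]
  have hsum3 : ∑ i, ((x1 i : ℤ) - (y1 i : ℤ) - e i) ^ 2 = ∑ i, ((x1 i : ℤ) - (y1 i : ℤ)) ^ 2 := by
    have : statZ q d g3 = ∑ i, ((x1 i : ℤ) - (y1 i : ℤ) - e i) ^ 2 := by
      rw [statZ]
      refine Finset.sum_congr rfl fun i _ => ?_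
      have hx : (x3 i : ℤ) = (x1 i : ℤ) := by rw [hx31]
      rw [show ((g3 i).1 : ℤ) = (x3 i : ℤ) from rfl, show ((g3 i).2 : ℤ) = (y3 i : ℤ) from rfl,
        hx, hy3e i]
      ring
    rw [← this, hs3, ← hs1, statZ]
  have hee : ∑ i, (e i) ^ 2 = 0 := by
    have expand : (2 : ℤ) * ∑ i, (e i) ^ 2 =
        (∑ i, ((x1 i : ℤ) - (y1 i : ℤ) + e i) ^ 2) + (∑ i, ((x1 i : ℤ) - (y1 i : ℤ) - e i) ^ 2)
          - 2 * ∑ i, ((x1 i : ℤ) - (y1 i : ℤ)) ^ 2 := by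
      rw [← Finset.sum_add_distrib, Finset.mul_sum, Finset.mul_sum, ← Finset.sum_sub_distrib]
      exact Finset.sum_congr rfl fun i _ => by ring
    rw [hsum2, hsum3] at expand
    omega
  have hezero : ∀ i ∈ Finset.univ, (e i) ^ 2 = 0 := by
    rw [← Finset.sum_eq_zero_iff_of_nonneg fun i _ => sq_nonneg (e i)]
    exact hee
  have hx21 : x2 = x1 := by
    funext i
    have : (e i) ^ 2 = 0 := hezero i (Finset.mem_univ i)
    have : e i = 0 := by exact pow_eq_zero_iff (by norm_num) |>.mp this
    simp only [he] at this
    have : (x2 i : ℤ) = (x1 i : ℤ) := by omega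
    exact Fin.ext (by exact_mod_cast this)
  apply hδ
  have : (dval q d x2 : ℤ) = (dval q d x1 : ℤ) := by rw [hx21]
  rw [hx2, hx1] at this
  omega


lemma statZ_toNat_le (hq : 1 ≤ q) (g : Fin d → Fin q × Fin q) :
    (statZ q d g).toNat ≤ d * (q - 1) ^ 2 := by
  have hb : statZ q d g ≤ (d : ℤ) * ((q : ℤ) - 1) ^ 2 := by
    rw [statZ]
    calc ∑ i, (((g i).1 : ℤ) - ((g i).2 : ℤ)) ^ 2
        ≤ ∑ _i : Fin d, ((q : ℤ) - 1) ^ 2 := by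
          refine Finset.sum_le_sum fun i _ => ?_
          have h1 : ((g i).1 : ℤ) ≤ (q : ℤ) - 1 := by
            have := (g i).1.isLt; omega
          have h2 : ((g i).2 : ℤ) ≤ (q : ℤ) - 1 := by
            have := (g i).2.isLt; omega
          have h3 : (0 : ℤ) ≤ ((g i).1 : ℤ) := Int.natCast_nonneg _
          have h4 : (0 : ℤ) ≤ ((g i).2 : ℤ) := Int.natCast_nonneg _
          nlinarith
      _ = (d : ℤ) * ((q : ℤ) - 1) ^ 2 := by
          rw [Finset.sum_const, Finset.card_univ, Fintype.card_fin]; ring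
  have hcast : ((d * (q - 1) ^ 2 : ℕ) : ℤ) = (d : ℤ) * ((q : ℤ) - 1) ^ 2 := by
    push_cast [Nat.cast_sub hq]
    ring
  omega

lemma sum_card_GreenB (hq : 1 ≤ q) :
    ∑ r ∈ Finset.range (d * (q - 1) ^ 2 + 1), (GreenB q d r).card = (good q).card ^ d := by
  have h1 : (Fintype.piFinset fun _ : Fin d => good q).card = (good q).card ^ d := by
    rw [Fintype.card_piFinset, Finset.prod_const, Finset.card_univ, Fintype.card_fin]
  rw [← h1]
  rw [Finset.card_eq_sum_card_fiberwise
    (f := fun g => (statZ q d g).toNat) (t := Finset.range (d * (q - 1) ^ 2 + 1))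
    (fun g _ => Finset.mem_range.mpr (Nat.lt_succ_of_le (statZ_toNat_le q d hq g)))]
  rfl

lemma exists_r (hq : 1 ≤ q) :
    ∃ r, (good q).card ^ d ≤ (d * (q - 1) ^ 2 + 1) * (GreenB q d r).card := by
  have hne : (Finset.range (d * (q - 1) ^ 2 + 1)).Nonempty := by
    exact Finset.nonempty_range_iff.mpr (by omega)
  have := Finset.exists_le_of_sum_le (f := fun _ => (good q).card ^ d)
    (g := fun r => (d * (q - 1) ^ 2 + 1) * (GreenB q d r).card) hne ?_
  · obtain ⟨r, _, hr⟩ := this; exact ⟨r, hr⟩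
  · rw [← Finset.mul_sum, sum_card_GreenB q d hq, Finset.sum_const, Finset.card_range, smul_eq_mul]

lemma card_GreenA (r : ℕ) : (GreenA q d r).card = (GreenB q d r).card := by
  rw [GreenA]
  apply Finset.card_image_of_injective
  intro g1 g2 h
  rw [Prod.mk.injEq] at h
  have h1 : (fun i => (g1 i).1) = fun i => (g2 i).1 :=
    dval_injective q d (by exact_mod_cast h.1)
  have h2 : (fun i => (g1 i).2) = fun i => (g2 i).2 :=
    dval_injective q d (by exact_mod_cast h.2)
  funext i
  exact Prod.ext (congrFun h1 i) (congrFun h2 i)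

lemma greenA_subset (r : ℕ) :
    GreenA q d r ⊆ Finset.Ico 0 ((q ^ d : ℕ) : ℤ) ×ˢ Finset.Ico 0 ((q ^ d : ℕ) : ℤ) := by
  intro p hp
  rw [GreenA, Finset.mem_image] at hp
  obtain ⟨g, _, rfl⟩ := hp
  rw [Finset.mem_product, Finset.mem_Ico, Finset.mem_Ico]
  dsimp only
  refine ⟨⟨Int.natCast_nonneg _, ?_⟩, Int.natCast_nonneg _, ?_⟩ <;>
    exact_mod_cast dval_lt q d _

-- counting `good`
lemma fiber_card (hq : 1 ≤ q) (u : Fin q) :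
    (Finset.univ.filter fun v : Fin q =>
      q / 2 ≤ (u : ℕ) + (v : ℕ) ∧ (u : ℕ) + (v : ℕ) < q / 2 + q).card
      + (q / 2 - (u : ℕ)) + ((u : ℕ) - q / 2) = q := by
  have hcard : (Finset.univ.filter fun v : Fin q =>
      q / 2 ≤ (u : ℕ) + (v : ℕ) ∧ (u : ℕ) + (v : ℕ) < q / 2 + q).card
      = ((Finset.range q).filter fun m => q / 2 ≤ (u : ℕ) + m ∧ (u : ℕ) + m < q / 2 + q).card := by
    rw [Finset.card_filter, Finset.card_filter]
    exact Fin.sum_univ_eq_sum_range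
      (fun m => if q / 2 ≤ (u : ℕ) + m ∧ (u : ℕ) + m < q / 2 + q then 1 else 0) q
  have hIco : ((Finset.range q).filter fun m => q / 2 ≤ (u : ℕ) + m ∧ (u : ℕ) + m < q / 2 + q)
      = Finset.Ico (q / 2 - (u : ℕ)) (min q (q / 2 + q - (u : ℕ))) := by
    ext m
    rw [Finset.mem_filter, Finset.mem_range, Finset.mem_Ico]
    omega
  rw [hcard, hIco, Nat.card_Ico]
  have := u.isLt
  omega

lemma card_good (hq : 2 ≤ q) : 3 * q ^ 2 ≤ 4 * (good q).card := by
  -- card good as a sum over fibers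
  have hfib : (good q).card + (∑ u : Fin q, (q / 2 - (u : ℕ)))
      + (∑ u : Fin q, ((u : ℕ) - q / 2)) = q * q := by
    have h1 : (good q).card = ∑ u : Fin q, (Finset.univ.filter fun v : Fin q =>
        q / 2 ≤ (u : ℕ) + (v : ℕ) ∧ (u : ℕ) + (v : ℕ) < q / 2 + q).card := by
      rw [good, Finset.card_filter]
      rw [← Finset.univ_product_univ, Finset.sum_product]
      exact Finset.sum_congr rfl fun u _ => (Finset.card_filter _ _).symm
    rw [h1, ← Finset.sum_add_distrib, ← Finset.sum_add_distrib]
    have h2 : ∀ u : Fin q, (Finset.univ.filter fun v : Fin q =>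
        q / 2 ≤ (u : ℕ) + (v : ℕ) ∧ (u : ℕ) + (v : ℕ) < q / 2 + q).card
        + (q / 2 - (u : ℕ)) + ((u : ℕ) - q / 2) = q := fun u => fiber_card q (by omega) u
    rw [Finset.sum_congr rfl fun u _ => h2 u, Finset.sum_const, Finset.card_univ,
      Fintype.card_fin, smul_eq_mul]
  -- evaluate the two sums
  set h := q / 2 with hh
  have hS1 : (∑ u : Fin q, (h - (u : ℕ))) * 2 = (h + 1) * h := by
    rw [Fin.sum_univ_eq_sum_range (fun m => h - m) q]
    have hsub : ∑ m ∈ Finset.range q, (h - m) = ∑ m ∈ Finset.range (h + 1), (h - m) := by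
      apply (Finset.sum_subset (Finset.range_subset_range.mpr (by omega)) ?_).symm
      intro m _ hm
      rw [Finset.mem_range] at hm
      omega
    rw [hsub]
    have hrefl : ∑ m ∈ Finset.range (h + 1), (h - m) = ∑ m ∈ Finset.range (h + 1), m := by
      rw [← Finset.sum_range_reflect (fun m => m) (h + 1)]
      exact Finset.sum_congr rfl fun m hm => by
        rw [Finset.mem_range] at hm; omega
    rw [hrefl, Finset.sum_range_id_mul_two]
    simp
  have hS2 : (∑ u : Fin q, ((u : ℕ) - h)) * 2 = (q - h) * (q - h - 1) := by
    rw [Fin.sum_univ_eq_sum_range (fun m => m - h) q]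
    have hsplit : ∑ m ∈ Finset.range q, (m - h) = ∑ m ∈ Finset.Ico h q, (m - h) := by
      rw [Finset.range_eq_Ico]
      rw [← Finset.sum_Ico_consecutive (fun m => m - h) (Nat.zero_le h) (by omega : h ≤ q)]
      have : ∑ m ∈ Finset.Ico 0 h, (m - h) = 0 := by
        apply Finset.sum_eq_zero
        intro m hm
        rw [Finset.mem_Ico] at hm
        omega
      omega
    rw [hsplit, Finset.sum_Ico_eq_sum_range]
    have : ∑ k ∈ Finset.range (q - h), (h + k - h) = ∑ k ∈ Finset.range (q - h), k :=
      Finset.sum_congr rfl fun k _ => by omega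
    rw [this, Finset.sum_range_id_mul_two]
  -- put together, case on parity
  set P := (good q).card
  set S1 := ∑ u : Fin q, (h - (u : ℕ))
  set S2 := ∑ u : Fin q, ((u : ℕ) - h)
  have hq2 : q = 2 * h ∨ q = 2 * h + 1 := by omega
  have hh1 : 1 ≤ h := by omega
  rcases hq2 with hcase | hcase
  · -- q = 2h : q - h = h
    have e1 : q - h = h := by omega
    rw [e1] at hS2
    zify [hh1] at hfib hS1 hS2 hcase ⊢
    nlinarith [hfib, hS1, hS2, hcase]
  · have e1 : q - h = h + 1 := by omega
    rw [e1] at hS2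
    have e2 : h + 1 - 1 = h := by omega
    rw [e2] at hS2
    zify at hfib hS1 hS2 hcase ⊢
    nlinarith [hfib, hS1, hS2, hcase]




lemma beta_lb : (2:ℝ)/5 ≤ Real.logb 2 (4/3) := by
  rw [Real.le_logb_iff_rpow_le (by norm_num) (by norm_num)]
  by_contra hcon
  push_neg at hcon
  have h5 : ((2:ℝ) ^ ((2:ℝ)/5)) ^ (5:ℕ) = 4 := by
    rw [← Real.rpow_natCast ((2:ℝ) ^ ((2:ℝ)/5)) 5, ← Real.rpow_mul (by norm_num)]
    norm_num
  have := pow_lt_pow_left₀ hcon (by norm_num : (0:ℝ) ≤ 4/3) (by norm_num : 5 ≠ 0)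
  rw [h5] at this
  norm_num at this

lemma logb_le_3sqrt (d : ℕ) (hd : 1 ≤ d) : Real.logb 2 d ≤ 3 * Real.sqrt d := by
  have hd1 : (1:ℝ) ≤ (d:ℝ) := by exact_mod_cast hd
  have hsq : (0:ℝ) < Real.sqrt d := Real.sqrt_pos.mpr (by linarith)
  have hlog : Real.log d ≤ 2 * Real.sqrt d := by
    have h1 : Real.log (Real.sqrt d) ≤ Real.sqrt d - 1 := Real.log_le_sub_one_of_pos hsq
    have h2 : Real.log (Real.sqrt d) = Real.log d / 2 := Real.log_sqrt (by positivity)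
    linarith
  rw [Real.logb, div_le_iff₀ (Real.log_pos (by norm_num))]
  nlinarith [Real.log_two_gt_d9, hsq.le, hlog]

end GreenAux

open GreenAux in
/-- For every ε > 0 there exists d₀ such that for every integer d ≥ d₀, setting
q = ⌊(2/√3)^d⌋ and N = q^d, there is a corner-free set A ⊆ {0,…,N−1}² with
#A ≥ 2^{-(c+ε)·√(log₂ N)} · N², where c = 2·√(2·log₂(4/3)). -/
theorem corner_free_lower_bound_explicit (ε : ℝ) (hε : 0 < ε) :
    ∃ d₀ : ℕ, ∀ d : ℕ, d₀ ≤ d →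
      ∀ q N : ℕ, q = ⌊(2 / Real.sqrt 3) ^ d⌋₊ → N = q ^ d →
        ∃ A : Finset (ℤ × ℤ),
          A ⊆ Finset.Ico 0 (N : ℤ) ×ˢ Finset.Ico 0 (N : ℤ) ∧
          CornerFreeZ2 (A : Set (ℤ × ℤ)) ∧
          (2 : ℝ) ^ (-(2 * Real.sqrt (2 * Real.logb 2 (4 / 3)) + ε) *
              Real.sqrt (Real.logb 2 N)) * (N : ℝ) ^ 2 ≤ (A.card : ℝ) := by
  set β : ℝ := Real.logb 2 (4/3) with hβ
  clear_value β
  have hβl : (2:ℝ)/5 ≤ β := by rw [hβ]; exact beta_lb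
  have hβpos : 0 < β := by linarith
  have hsβ : 0 < Real.sqrt β := Real.sqrt_pos.mpr hβpos
  set K : ℝ := ε * Real.sqrt β / 2 with hK
  have hKpos : 0 < K := by rw [hK]; positivity
  clear_value K
  refine ⟨⌈(6 / K) ^ 2⌉₊ + 10, fun d hd q N hqdef hNdef => ?_⟩
  -- basic facts about d
  have hd10 : 10 ≤ d := by omega
  have hd1R : (1:ℝ) ≤ (d:ℝ) := by exact_mod_cast (by omega : 1 ≤ d)
  have hdK : (6 / K) ^ 2 ≤ (d:ℝ) := by
    calc (6/K)^2 ≤ (⌈(6 / K) ^ 2⌉₊ : ℝ) := Nat.le_ceil _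
    _ ≤ (d:ℝ) := by exact_mod_cast le_trans (by omega) hd
  have hsd : 6 / K ≤ Real.sqrt d := by
    rw [show (6:ℝ)/K = Real.sqrt ((6/K)^2) from (Real.sqrt_sq (by positivity)).symm]
    exact Real.sqrt_le_sqrt hdK
  -- basic facts about t = 2/√3
  set t : ℝ := 2 / Real.sqrt 3 with ht
  have hs3 : (0:ℝ) < Real.sqrt 3 := Real.sqrt_pos.mpr (by norm_num)
  have ht2 : t ^ 2 = 4 / 3 := by
    rw [ht, div_pow, Real.sq_sqrt (by norm_num : (0:ℝ) ≤ 3)]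
    norm_num
  have hs32 : Real.sqrt 3 < 2 := by
    nlinarith [Real.sq_sqrt (by norm_num : (0:ℝ) ≤ 3), hs3]
  have ht1 : 1 < t := by
    rw [ht, lt_div_iff₀ hs3]; linarith
  clear_value t
  have htpos : 0 < t := by linarith
  have htd2 : (2:ℝ) ≤ t ^ d := by
    have h10 : t ^ 10 ≤ t ^ d := pow_le_pow_right₀ (le_of_lt ht1) hd10
    have : t ^ 10 = (4/3 : ℝ) ^ 5 := by
      rw [show (10:ℕ) = 2 * 5 from rfl, pow_mul, ht2]
    nlinarith [h10, this]
  -- basic facts about q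
  have hq2 : 2 ≤ q := by
    rw [hqdef]
    exact Nat.le_floor (by exact_mod_cast htd2)
  have hqpos : (0:ℝ) < (q:ℝ) := by exact_mod_cast Nat.lt_of_lt_of_le (by norm_num) hq2
  have hqR : (q:ℝ) ≤ t ^ d := by rw [hqdef]; exact Nat.floor_le (by positivity)
  have hqR2 : t ^ d ≤ 2 * (q:ℝ) := by
    have h1 : t ^ d < (q:ℝ) + 1 := by rw [hqdef]; exact Nat.lt_floor_add_one _
    have : (1:ℝ) ≤ (q:ℝ) := by exact_mod_cast Nat.one_le_of_lt hq2
    linarith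
  -- logs
  have hlogt : Real.logb 2 t = β / 2 := by
    have : β = Real.logb 2 (t ^ 2) := by rw [ht2]; exact hβ
    rw [Real.logb_pow] at this
    push_cast at this
    linarith
  have hlogq_up : Real.logb 2 q ≤ (d:ℝ) * β / 2 := by
    calc Real.logb 2 q ≤ Real.logb 2 (t ^ d) :=
          Real.logb_le_logb_of_le (by norm_num) hqpos hqR
    _ = (d:ℝ) * β / 2 := by rw [Real.logb_pow, hlogt]; ring
  have hlogq_lo : (d:ℝ) * β / 2 - 1 ≤ Real.logb 2 q := by
    have h1 : t ^ d / 2 ≤ (q:ℝ) := by linarith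
    calc (d:ℝ) * β / 2 - 1 = Real.logb 2 (t ^ d / 2) := by
          rw [Real.logb_div (by positivity) (by norm_num), Real.logb_pow, hlogt,
            Real.logb_self_eq_one (by norm_num)]
          ring
    _ ≤ Real.logb 2 q := Real.logb_le_logb_of_le (by norm_num) (by positivity) h1
  -- L = logb 2 N
  have hNcast : ((N:ℕ) : ℝ) = (q:ℝ) ^ d := by rw [hNdef]; push_cast; ring
  set L : ℝ := Real.logb 2 N with hL
  clear_value L
  have hLd : L = (d:ℝ) * Real.logb 2 q := by rw [hL, hNcast, Real.logb_pow]
  have hdβ4 : 4 ≤ (d:ℝ) * β := by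
    have h10 : (10:ℝ) ≤ (d:ℝ) := by exact_mod_cast hd10
    nlinarith [mul_le_mul_of_nonneg_right h10 hβpos.le]
  have hLlo2 : (d:ℝ)^2 * β / 2 - (d:ℝ) ≤ L := by
    rw [hLd]
    nlinarith [hlogq_lo, hd1R]
  have hLlo : (d:ℝ)^2 * β / 4 ≤ L := by nlinarith
  have hLpos : 0 < L := by nlinarith
  -- the c-part : c √L ≥ 2dβ - 3
  set c : ℝ := 2 * Real.sqrt (2 * β) with hc
  clear_value c
  have hcsq : c * Real.sqrt L ≥ 2 * (d:ℝ) * β - 3 := by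
    have h1 : c * Real.sqrt L = 2 * Real.sqrt (2 * β * L) := by
      rw [hc, Real.sqrt_mul (by positivity : (0:ℝ) ≤ 2 * β) L]
      ring
    have h2 : ((d:ℝ) * β - 3/2) ^ 2 ≤ 2 * β * L := by nlinarith
    have h3 : (d:ℝ) * β - 3/2 ≤ Real.sqrt (2 * β * L) := by
      rw [show (d:ℝ) * β - 3/2 = Real.sqrt (((d:ℝ) * β - 3/2)^2) from
        (Real.sqrt_sq (by nlinarith)).symm]
      exact Real.sqrt_le_sqrt h2
    rw [h1]; linarith
  -- the ε-part : ε √L ≥ logb2 d + 3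
  have hεsq : ε * Real.sqrt L ≥ Real.logb 2 d + 3 := by
    have h1 : (d:ℝ) / 2 * Real.sqrt β ≤ Real.sqrt L := by
      have e : Real.sqrt (((d:ℝ)/2)^2 * β) = (d:ℝ)/2 * Real.sqrt β := by
        rw [Real.sqrt_mul (by positivity : (0:ℝ) ≤ ((d:ℝ)/2)^2) β,
          Real.sqrt_sq (by positivity : (0:ℝ) ≤ (d:ℝ)/2)]
      rw [← e]
      apply Real.sqrt_le_sqrt
      nlinarith
    have h2 : ε * Real.sqrt L ≥ K * d := by
      have : K * d = ε * ((d:ℝ)/2 * Real.sqrt β) := by rw [hK]; ring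
      rw [this]
      exact mul_le_mul_of_nonneg_left h1 (le_of_lt hε)
    have hsdpos : (1:ℝ) ≤ Real.sqrt d := by
      rw [show (1:ℝ) = Real.sqrt 1 from (Real.sqrt_one).symm]
      exact Real.sqrt_le_sqrt hd1R
    have h3 : K * d ≥ 6 * Real.sqrt d := by
      have h6 : 6 ≤ Real.sqrt d * K := (div_le_iff₀ hKpos).mp hsd
      have hds : Real.sqrt d * Real.sqrt d = (d:ℝ) := Real.mul_self_sqrt (by positivity)
      nlinarith [hsdpos, h6, hds, hKpos.le, Real.sqrt_nonneg (d:ℝ)]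
    have h4 : Real.logb 2 d ≤ 3 * Real.sqrt d := logb_le_3sqrt d (by omega)
    nlinarith
  -- exponent inequality
  have hexp : -(c + ε) * Real.sqrt L + (Real.logb 2 d + 2 * Real.logb 2 q) ≤ -(d:ℝ) * β := by
    have expand : -(c + ε) * Real.sqrt L = -(c * Real.sqrt L) - ε * Real.sqrt L := by ring
    rw [expand]
    linarith [hcsq, hεsq, hlogq_up]
  -- key multiplicative inequality
  have hkey : (2:ℝ) ^ (-(c + ε) * Real.sqrt L) * ((d:ℝ) * (q:ℝ)^2) ≤ (3/4:ℝ) ^ d := by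
    have hdq : (0:ℝ) < (d:ℝ) * (q:ℝ)^2 := by positivity
    have h34 : ((3:ℝ)/4) = (2:ℝ) ^ (-β) := by
      rw [Real.rpow_neg (by norm_num), hβ, Real.rpow_logb (by norm_num) (by norm_num) (by norm_num)]
      norm_num
    have hlhs : (2:ℝ) ^ (-(c + ε) * Real.sqrt L) * ((d:ℝ) * (q:ℝ)^2)
        = (2:ℝ) ^ (-(c + ε) * Real.sqrt L + (Real.logb 2 d + 2 * Real.logb 2 q)) := by
      rw [Real.rpow_add (by norm_num)]
      congr 1
      rw [Real.rpow_add (by norm_num), Real.rpow_logb (by norm_num) (by norm_num) (by positivity)]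
      congr 1
      rw [show (2:ℝ) * Real.logb 2 q = Real.logb 2 ((q:ℝ)^2) by rw [Real.logb_pow]; push_cast; ring,
        Real.rpow_logb (by norm_num) (by norm_num) (by positivity)]
    have hrhs : ((3:ℝ)/4) ^ d = (2:ℝ) ^ (-(d:ℝ) * β) := by
      rw [h34, ← Real.rpow_natCast ((2:ℝ)^(-β)) d, ← Real.rpow_mul (by norm_num)]
      congr 1
      ring
    rw [hlhs, hrhs]
    exact Real.rpow_le_rpow_of_exponent_le (by norm_num) hexp
  -- get the set
  obtain ⟨r, hr⟩ := exists_r q d (by omega)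
  refine ⟨GreenA q d r, by rw [hNdef]; exact greenA_subset q d r, greenA_cornerFree q d r, ?_⟩
  rw [card_GreenA]
  set B : ℝ := ((GreenB q d r).card : ℝ) with hB
  clear_value B
  have hBnn : 0 ≤ B := by rw [hB]; positivity
  -- cast the counting bound
  have hcount : ((3:ℝ)/4) ^ d * (q:ℝ)^(2*d) ≤ ((d:ℝ) * (q:ℝ)^2) * B := by
    have hgood : (3:ℝ) * (q:ℝ)^2 ≤ 4 * ((good q).card : ℝ) := by
      exact_mod_cast card_good q hq2
    have hr' : (((good q).card : ℝ)) ^ d ≤ ((d * (q-1)^2 + 1 : ℕ) : ℝ) * B := by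
      rw [hB]
      exact_mod_cast hr
    have hRle : ((d * (q-1)^2 + 1 : ℕ) : ℝ) ≤ (d:ℝ) * (q:ℝ)^2 := by
      have : (d * (q-1)^2 + 1 : ℕ) ≤ d * q^2 := by
        obtain ⟨k, rfl⟩ : ∃ k, q = k + 2 := ⟨q - 2, by omega⟩
        have e : k + 2 - 1 = k + 1 := by omega
        rw [e]
        have h2 : 1 ≤ d * (2*k+3) := Nat.one_le_iff_ne_zero.mpr
          (Nat.mul_ne_zero (by omega) (by omega))
        calc d * (k+1)^2 + 1 ≤ d * (k+1)^2 + d * (2*k+3) := by omega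
        _ = d * ((k+1)^2 + (2*k+3)) := by ring
        _ = d * (k+2)^2 := by ring
      calc ((d * (q-1)^2 + 1 : ℕ) : ℝ) ≤ ((d * q^2 : ℕ) : ℝ) := by exact_mod_cast this
      _ = (d:ℝ) * (q:ℝ)^2 := by push_cast; ring
    have h34q : ((3:ℝ)/4) ^ d * (q:ℝ)^(2*d) ≤ (((good q).card : ℝ)) ^ d := by
      have hstep : (3:ℝ)/4 * (q:ℝ)^2 ≤ ((good q).card : ℝ) := by linarith
      calc ((3:ℝ)/4) ^ d * (q:ℝ)^(2*d) = ((3:ℝ)/4 * (q:ℝ)^2) ^ d := by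
            rw [mul_pow, ← pow_mul]
      _ ≤ (((good q).card : ℝ)) ^ d := pow_le_pow_left₀ (by positivity) hstep d
    calc ((3:ℝ)/4) ^ d * (q:ℝ)^(2*d) ≤ (((good q).card : ℝ)) ^ d := h34q
    _ ≤ ((d * (q-1)^2 + 1 : ℕ) : ℝ) * B := hr'
    _ ≤ ((d:ℝ) * (q:ℝ)^2) * B := mul_le_mul_of_nonneg_right hRle hBnn
  -- final chain
  have hN2 : ((N:ℕ) : ℝ)^2 = (q:ℝ)^(2*d) := by rw [hNcast, ← pow_mul, mul_comm d 2]
  rw [hN2]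
  have hdq : (0:ℝ) < (d:ℝ) * (q:ℝ)^2 := by positivity
  rw [← mul_le_mul_iff_of_pos_right hdq]
  calc (2:ℝ) ^ (-(c + ε) * Real.sqrt L) * (q:ℝ)^(2*d) * ((d:ℝ) * (q:ℝ)^2)
      = ((2:ℝ) ^ (-(c + ε) * Real.sqrt L) * ((d:ℝ) * (q:ℝ)^2)) * (q:ℝ)^(2*d) := by ring
  _ ≤ ((3:ℝ)/4) ^ d * (q:ℝ)^(2*d) := by
      apply mul_le_mul_of_nonneg_right hkey (by positivity)
  _ ≤ ((d:ℝ) * (q:ℝ)^2) * B := hcount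
  _ = B * ((d:ℝ) * (q:ℝ)^2) := by ring
end

section
/- Let q ≥ 2 and d ≥ 1 be integers and let r ≥ 0 be an integer. Then the set A_r = {(x, y) ∈ {0,…,q^d−1}² : ‖π(x) − π(y)‖₂² = r and q/2 ≤ x_i + y_i < 3q/2 for all 0 ≤ i < d} contains no corner; that is, if (x, y), (x + s, y), (x, y + s) all lie in A_r for some integer s, then s = 0. -/
/-- The `i`-th digit of the base-`q` expansion of a (nonnegative) integer `n`. -/
def zdigit (q : ℕ) (n : ℤ) (i : ℕ) : ℤ := n / (q : ℤ) ^ i % (q : ℤ)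

/-- The set `A_r` of pairs `(x, y) ∈ {0,…,q^d−1}²` with `‖π(x) − π(y)‖₂² = r` and
`q/2 ≤ x_i + y_i < 3q/2` for all `0 ≤ i < d`, where `π(x)` is the vector of base-`q`
digits of `x`. -/
def cornerFreeSet (q d r : ℕ) : Set (ℤ × ℤ) :=
  {p : ℤ × ℤ |
    0 ≤ p.1 ∧ p.1 < (q : ℤ) ^ d ∧ 0 ≤ p.2 ∧ p.2 < (q : ℤ) ^ d ∧
    (∑ i ∈ Finset.range d, (zdigit q p.1 i - zdigit q p.2 i) ^ 2) = (r : ℤ) ∧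
    ∀ i < d, (q : ℚ) / 2 ≤ ((zdigit q p.1 i + zdigit q p.2 i : ℤ) : ℚ) ∧
      ((zdigit q p.1 i + zdigit q p.2 i : ℤ) : ℚ) < 3 * q / 2}

lemma emod_mul_right (a b n : ℤ) (ha : 0 < a) (hb : 0 < b) :
    n % (a * b) = n % a + a * (n / a % b) := by
  have e1 : n = (n % a + a * (n / a % b)) + (a * b) * (n / a / b) := by
    have h2 := Int.emod_add_mul_ediv (n / a) b
    have h1 := Int.emod_add_mul_ediv n a
    nlinarith [h1, h2]
  have b1 : 0 ≤ n % a := Int.emod_nonneg n ha.ne'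
  have b2 : n % a < a := Int.emod_lt_of_pos n ha
  have b3 : 0 ≤ n / a % b := Int.emod_nonneg _ hb.ne'
  have b4 : n / a % b < b := Int.emod_lt_of_pos _ hb
  calc n % (a * b) = ((n % a + a * (n / a % b)) + (a * b) * (n / a / b)) % (a * b) := by
        rw [← e1]
    _ = (n % a + a * (n / a % b)) % (a * b) := by
        rw [Int.add_mul_emod_self_left]
    _ = n % a + a * (n / a % b) := Int.emod_eq_of_lt (by positivity) (by nlinarith)

lemma zdigit_sum_emod (q : ℕ) (hq : 0 < q) (d : ℕ) (n : ℤ) :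
    ∑ i ∈ Finset.range d, zdigit q n i * (q : ℤ) ^ i = n % (q : ℤ) ^ d := by
  induction d with
  | zero => simp
  | succ d ih =>
    rw [Finset.sum_range_succ, ih, pow_succ,
      emod_mul_right ((q:ℤ)^d) q n (by positivity) (by exact_mod_cast hq)]
    unfold zdigit; ring

lemma zdigit_expansion (q : ℕ) (hq : 0 < q) (d : ℕ) (n : ℤ) (h0 : 0 ≤ n)
    (h1 : n < (q : ℤ) ^ d) :
    ∑ i ∈ Finset.range d, zdigit q n i * (q : ℤ) ^ i = n := by
  rw [zdigit_sum_emod q hq d n, Int.emod_eq_of_lt h0 h1]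

lemma digits_unique (q : ℕ) (hq : 0 < q) :
    ∀ d : ℕ, ∀ e : ℕ → ℤ, (∀ i < d, |e i| < q) →
      (∑ i ∈ Finset.range d, e i * (q : ℤ) ^ i) = 0 → ∀ i < d, e i = 0 := by
  intro d
  induction d with
  | zero => intro e _ _ i hi; omega
  | succ d ih =>
    intro e hb hsum i hi
    have hsum' : e 0 + (q : ℤ) * ∑ i ∈ Finset.range d, e (i + 1) * (q : ℤ) ^ i = 0 := by
      rw [Finset.sum_range_succ'] at hsum
      have hrw : ∑ k ∈ Finset.range d, e (k + 1) * (q : ℤ) ^ (k + 1)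
          = (q : ℤ) * ∑ i ∈ Finset.range d, e (i + 1) * (q : ℤ) ^ i := by
        rw [Finset.mul_sum]
        exact Finset.sum_congr rfl fun j _ => by ring
      rw [hrw] at hsum
      simpa using by linarith [hsum]
    have he0 : e 0 = 0 := by
      have hdvd : (q : ℤ) ∣ e 0 := ⟨-(∑ i ∈ Finset.range d, e (i + 1) * (q : ℤ) ^ i), by linarith⟩
      exact Int.eq_zero_of_abs_lt_dvd hdvd (hb 0 (by omega))
    have hS : (∑ i ∈ Finset.range d, e (i + 1) * (q : ℤ) ^ i) = 0 := by
      have hq' : (q : ℤ) ≠ 0 := by exact_mod_cast hq.ne'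
      have := hsum'
      rw [he0, zero_add] at this
      exact (mul_eq_zero.mp this).resolve_left hq'
    have hrest := ih (fun i => e (i + 1)) (fun i hi => hb (i + 1) (by omega)) hS
    match i with
    | 0 => exact he0
    | j + 1 => exact hrest j (by omega)


/-- The set `A_r` contains no corner: if `(x, y), (x + s, y), (x, y + s)` all lie in `A_r`
for some integer `s`, then `s = 0`. -/
theorem cornerFreeSet_is_corner_free (q d r : ℕ) (hq : 2 ≤ q) (hd : 1 ≤ d)
    (x y s : ℤ)
    (h₁ : (x, y) ∈ cornerFreeSet q d r)
    (h₂ : (x + s, y) ∈ cornerFreeSet q d r)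
    (h₃ : (x, y + s) ∈ cornerFreeSet q d r) :
    s = 0 := by
  have hq0 : 0 < q := by omega
  simp only [cornerFreeSet, Set.mem_setOf_eq] at h₁ h₂ h₃
  obtain ⟨hx0, hxlt, hy0, hylt, hsum1, hmid1⟩ := h₁
  obtain ⟨hxs0, hxslt, -, -, hsum2, hmid2⟩ := h₂
  obtain ⟨-, -, hys0, hyslt, hsum3, hmid3⟩ := h₃
  set u : ℕ → ℤ := fun i => zdigit q x i with hu
  set u' : ℕ → ℤ := fun i => zdigit q (x + s) i with hu'
  set v : ℕ → ℤ := fun i => zdigit q y i with hv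
  set v' : ℕ → ℤ := fun i => zdigit q (y + s) i with hv'
  -- Step 1: uniqueness of mid-range representations gives u' + v = u + v' digitwise
  set e : ℕ → ℤ := fun i => (u' i + v i) - (u i + v' i) with he
  have hbound : ∀ i < d, |e i| < q := by
    intro i hi
    obtain ⟨b1l, b1r⟩ := hmid2 i hi
    obtain ⟨b2l, b2r⟩ := hmid3 i hi
    push_cast at b1l b1r b2l b2r
    simp only [he, hu, hu', hv, hv']
    rw [abs_lt]
    constructor
    · have h : (-(q : ℚ)) < ((zdigit q (x + s) i + zdigit q y i
          - (zdigit q x i + zdigit q (y + s) i) : ℤ) : ℚ) := by push_cast; linarith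
      exact_mod_cast h
    · have h : ((zdigit q (x + s) i + zdigit q y i
          - (zdigit q x i + zdigit q (y + s) i) : ℤ) : ℚ) < q := by push_cast; linarith
      exact_mod_cast h
  have hesum : (∑ i ∈ Finset.range d, e i * (q : ℤ) ^ i) = 0 := by
    have E1 := zdigit_expansion q hq0 d x hx0 hxlt
    have E2 := zdigit_expansion q hq0 d (x + s) hxs0 hxslt
    have E3 := zdigit_expansion q hq0 d y hy0 hylt
    have E4 := zdigit_expansion q hq0 d (y + s) hys0 hyslt
    have : (∑ i ∈ Finset.range d, e i * (q : ℤ) ^ i)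
        = (∑ i ∈ Finset.range d, u' i * (q : ℤ) ^ i)
          + (∑ i ∈ Finset.range d, v i * (q : ℤ) ^ i)
          - ((∑ i ∈ Finset.range d, u i * (q : ℤ) ^ i)
          + (∑ i ∈ Finset.range d, v' i * (q : ℤ) ^ i)) := by
      rw [← Finset.sum_add_distrib, ← Finset.sum_add_distrib, ← Finset.sum_sub_distrib]
      exact Finset.sum_congr rfl fun i _ => by simp only [he]; ring
    rw [this, E1, E2, E3, E4]
    ring
  have hezero : ∀ i < d, e i = 0 := digits_unique q hq0 d e hbound hesum
  -- Step 2: parallelogram law forces u' = u digitwise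
  have hpar : ∀ i ∈ Finset.range d,
      (u' i - v i) ^ 2 + (u i - v' i) ^ 2
        = 2 * (u i - v i) ^ 2 + 2 * (u' i - u i) ^ 2 := by
    intro i hi
    have h0 := hezero i (Finset.mem_range.mp hi)
    simp only [he] at h0
    have hv'i : v' i = v i + (u' i - u i) := by linarith
    rw [hv'i]; ring
  have htsum : (∑ i ∈ Finset.range d, (u' i - u i) ^ 2) = 0 := by
    have H := Finset.sum_congr rfl hpar
    rw [Finset.sum_add_distrib, hsum2, hsum3, Finset.sum_add_distrib,
      ← Finset.mul_sum, ← Finset.mul_sum, hsum1] at H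
    linarith
  have htzero : ∀ i ∈ Finset.range d, (u' i - u i) ^ 2 = 0 :=
    (Finset.sum_eq_zero_iff_of_nonneg fun i _ => sq_nonneg _).mp htsum
  have E1 := zdigit_expansion q hq0 d x hx0 hxlt
  have E2 := zdigit_expansion q hq0 d (x + s) hxs0 hxslt
  have hsums : (∑ i ∈ Finset.range d, zdigit q (x + s) i * (q : ℤ) ^ i)
      = ∑ i ∈ Finset.range d, zdigit q x i * (q : ℤ) ^ i := by
    refine Finset.sum_congr rfl fun i hi => ?_
    have h0 := htzero i hi
    have : u' i = u i := by nlinarith [h0]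
    simp only [hu, hu'] at this
    rw [this]
  linarith [E1, E2, hsums]
end

section
/- Let q ≥ 2 and d ≥ 1 be integers, and let x, y, s be integers with x, y, x + s, y + s all in {0,…,q^d−1}. Suppose that for every 0 ≤ i < d we have q/2 ≤ (x+s)_i + y_i < 3q/2 and q/2 ≤ x_i + (y+s)_i < 3q/2, where subscripts denote base-q digits. Then (x+s)_i + y_i = x_i + (y+s)_i for every 0 ≤ i < d; equivalently, π(x + s) + π(y) = π(x) + π(y + s) as vectors in ℤ^d. -/
lemma my_ediv_ediv (a b c : ℤ) (hb : 0 < b) (hc : 0 < c) : a / b / c = a / (b * c) := by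
  have h1 : a % b + b * (a / b) = a := Int.emod_add_mul_ediv a b
  have h2 : a / b % c + c * (a / b / c) = a / b := Int.emod_add_mul_ediv (a / b) c
  have key : a = (a % b + b * (a / b % c)) + (a / b / c) * (b * c) := by
    nlinarith [h1, h2]
  have hbc : (0:ℤ) < b * c := mul_pos hb hc
  have hr0 : 0 ≤ a % b + b * (a / b % c) :=
    add_nonneg (Int.emod_nonneg a (ne_of_gt hb))
      (mul_nonneg hb.le (Int.emod_nonneg _ (ne_of_gt hc)))
  have hrlt : a % b + b * (a / b % c) < b * c := by
    have h3 : a % b < b := Int.emod_lt_of_pos a hb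
    have h4 : a / b % c ≤ c - 1 := by
      have := Int.emod_lt_of_pos (a / b) hc; omega
    nlinarith
  exact ((Int.ediv_emod_unique hbc).mpr ⟨by linarith [key], hr0, hrlt⟩).1.symm

lemma zdigit_succ (q : ℕ) (hq : 0 < q) (n : ℤ) (i : ℕ) :
    zdigit q n (i + 1) = zdigit q (n / q) i := by
  unfold zdigit
  rw [pow_succ', ← my_ediv_ediv n q ((q:ℤ)^i) (by exact_mod_cast hq) (by positivity)]

lemma sum_zdigit (q : ℕ) (hq : 2 ≤ q) : ∀ (d : ℕ) (n : ℤ), 0 ≤ n → n < (q:ℤ) ^ d →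
    ∑ i ∈ Finset.range d, zdigit q n i * (q:ℤ) ^ i = n := by
  intro d
  induction d with
  | zero => intro n h0 h1; simp at h1 ⊢; omega
  | succ d ih =>
    intro n h0 h1
    have hq0 : (0:ℤ) < (q:ℤ) := by exact_mod_cast (by omega : 0 < q)
    rw [Finset.sum_range_succ']
    have hstep : ∀ i : ℕ, zdigit q n (i + 1) * (q:ℤ) ^ (i + 1)
        = (zdigit q (n / q) i * (q:ℤ) ^ i) * q := by
      intro i; rw [zdigit_succ q (by omega) n i, pow_succ]; ring
    simp only [hstep]
    rw [← Finset.sum_mul, ih (n / q) (Int.ediv_nonneg h0 hq0.le) ?_]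
    · have := Int.emod_add_mul_ediv n (q:ℤ)
      simp only [zdigit, pow_zero, Int.ediv_one]
      linarith [Int.emod_add_mul_ediv n (q:ℤ), mul_comm (q:ℤ) (n / q)]
    · have : n < (q:ℤ) ^ d * q := by rw [← pow_succ]; exact h1
      exact Int.ediv_lt_of_lt_mul hq0 (by linarith)

lemma zero_of_sum (q : ℕ) (hq : 2 ≤ q) : ∀ (d : ℕ) (u : ℕ → ℤ),
    (∀ i < d, |u i| < q) → ∑ i ∈ Finset.range d, u i * (q:ℤ) ^ i = 0 →
    ∀ i < d, u i = 0 := by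
  intro d
  induction d with
  | zero => intro u _ _ i hi; omega
  | succ d ih =>
    intro u hb hs
    have hq0 : ((q:ℤ)) ≠ 0 := by exact_mod_cast (by omega : q ≠ 0)
    rw [Finset.sum_range_succ'] at hs
    have hstep : ∀ i : ℕ, u (i + 1) * (q:ℤ) ^ (i + 1)
        = (u (i + 1) * (q:ℤ) ^ i) * q := by intro i; rw [pow_succ]; ring
    simp only [hstep] at hs
    rw [← Finset.sum_mul] at hs
    simp only [pow_zero, mul_one] at hs
    have hdvd : (q:ℤ) ∣ u 0 := ⟨-(∑ i ∈ Finset.range d, u (i+1) * (q:ℤ)^i), by linarith⟩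
    have hu0 : u 0 = 0 := by
      have := hb 0 (by omega)
      rcases hdvd with ⟨k, hk⟩
      have hqpos : (0:ℤ) < q := by exact_mod_cast (by omega : 0 < q)
      rcases lt_trichotomy k 0 with h | h | h
      · nlinarith [abs_lt.mp this]
      · simp [hk, h]
      · nlinarith [abs_lt.mp this]
    have hsum : ∑ i ∈ Finset.range d, u (i+1) * (q:ℤ)^i = 0 := by
      have : (∑ i ∈ Finset.range d, u (i+1) * (q:ℤ)^i) * q = 0 := by omega
      exact (mul_eq_zero.mp this).resolve_right hq0
    have := ih (fun i => u (i + 1)) (fun i hi => hb (i + 1) (by omega)) hsum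
    intro i hi
    cases i with
    | zero => exact hu0
    | succ j => exact this j (by omega)

/-- If `x, y, x + s, y + s ∈ {0,…,q^d−1}` and for every `0 ≤ i < d` we have
`q/2 ≤ (x+s)_i + y_i < 3q/2` and `q/2 ≤ x_i + (y+s)_i < 3q/2` (subscripts denoting
base-`q` digits), then `(x+s)_i + y_i = x_i + (y+s)_i` for every `0 ≤ i < d`. -/
theorem digit_sum_eq (q d : ℕ) (hq : 2 ≤ q) (hd : 1 ≤ d) (x y s : ℤ)
    (hx : 0 ≤ x ∧ x < (q : ℤ) ^ d) (hy : 0 ≤ y ∧ y < (q : ℤ) ^ d)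
    (hxs : 0 ≤ x + s ∧ x + s < (q : ℤ) ^ d) (hys : 0 ≤ y + s ∧ y + s < (q : ℤ) ^ d)
    (h₁ : ∀ i < d, (q : ℚ) / 2 ≤ ((zdigit q (x + s) i + zdigit q y i : ℤ) : ℚ) ∧
      ((zdigit q (x + s) i + zdigit q y i : ℤ) : ℚ) < 3 * q / 2)
    (h₂ : ∀ i < d, (q : ℚ) / 2 ≤ ((zdigit q x i + zdigit q (y + s) i : ℤ) : ℚ) ∧
      ((zdigit q x i + zdigit q (y + s) i : ℤ) : ℚ) < 3 * q / 2) :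
    ∀ i < d, zdigit q (x + s) i + zdigit q y i = zdigit q x i + zdigit q (y + s) i := by
  have key := zero_of_sum q hq d
    (fun i => (zdigit q (x + s) i + zdigit q y i) - (zdigit q x i + zdigit q (y + s) i))
    (by
      intro i hi
      obtain ⟨a1, a2⟩ := h₁ i hi
      obtain ⟨b1, b2⟩ := h₂ i hi
      push_cast at a1 a2 b1 b2
      simp only [abs_lt]
      constructor
      · have h : -((q:ℚ)) < ((zdigit q (x + s) i : ℚ) + zdigit q y i)
            - ((zdigit q x i : ℚ) + zdigit q (y + s) i) := by linarith
        exact_mod_cast h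
      · have h : ((zdigit q (x + s) i : ℚ) + zdigit q y i)
            - ((zdigit q x i : ℚ) + zdigit q (y + s) i) < q := by linarith
        exact_mod_cast h)
    (by
      simp only [sub_mul, add_mul]
      rw [Finset.sum_sub_distrib, Finset.sum_add_distrib, Finset.sum_add_distrib,
        sum_zdigit q hq d (x + s) hxs.1 hxs.2, sum_zdigit q hq d y hy.1 hy.2,
        sum_zdigit q hq d x hx.1 hx.2, sum_zdigit q hq d (y + s) hys.1 hys.2]
      ring)
  intro i hi
  have := key i hi
  omega
end

section
/- Let q ≥ 2 be an even integer and d ≥ 1 an integer. Then there exists an integer r with 0 ≤ r ≤ d(q−1)² such that the set A_r = {(x, y) ∈ {0,…,q^d−1}² : ‖π(x) − π(y)‖₂² = r and q/2 ≤ x_i + y_i < 3q/2 for all 0 ≤ i < d} satisfies #A_r ≥ (3q²/4)^d / (d(q−1)² + 1). In particular there exists r for which #A_r ≥ (dq²)^{-1} · (3q²/4)^d. -/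
/-- The `i`-th digit of the base-`q` expansion of a natural number `x`. -/
def digit (q x i : ℕ) : ℕ := x / q ^ i % q

open Finset


lemma digit_lt (q x i : ℕ) (hq : 0 < q) : digit q x i < q := Nat.mod_lt _ hq

lemma digit_zero (q x : ℕ) : digit q x 0 = x % q := by simp [digit]

lemma digit_succ (q x i : ℕ) : digit q x (i+1) = digit q (x / q) i := by
  simp only [digit, Nat.div_div_eq_div_mul, pow_succ]
  rw [mul_comm]

lemma count_one (m : ℕ) :
    ((Finset.range (2*m) ×ˢ Finset.range (2*m)).filter
      (fun p => m ≤ p.1 + p.2 ∧ p.1 + p.2 < 3*m)).card = 3 * m^2 := by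
  rw [Finset.card_filter, Finset.sum_product]
  have h1 : ∀ a, ∑ b ∈ Finset.range (2*m),
      (if m ≤ a + b ∧ a + b < 3*m then 1 else 0) =
      ((Finset.range (2*m)).filter (fun b => m ≤ a + b ∧ a + b < 3*m)).card := by
    intro a; rw [Finset.card_filter]
  simp_rw [h1]
  have h2 : ∀ a, ((Finset.range (2*m)).filter (fun b => m ≤ a + b ∧ a + b < 3*m))
      = Finset.Ico (m - a) (min (3*m - a) (2*m)) := by
    intro a; ext b
    simp only [Finset.mem_filter, Finset.mem_range, Finset.mem_Ico]
    omega
  simp_rw [h2, Nat.card_Ico]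
  have h3 : ∑ a ∈ Finset.range (2*m), (min (3*m - a) (2*m) - (m - a)) =
      ∑ a ∈ Finset.range (m + m), (min (3*m - a) (2*m) - (m - a)) := by
    congr 1; congr 1; omega
  rw [h3, Finset.sum_range_add (f := fun a => min (3*m - a) (2*m) - (m - a)) m m,
    ← Finset.sum_add_distrib]
  have h4 : ∀ a ∈ Finset.range m,
      (min (3*m - a) (2*m) - (m - a)) + (min (3*m - (m + a)) (2*m) - (m - (m + a))) = 3*m := by
    intro a ha; simp only [Finset.mem_range] at ha; omega
  rw [Finset.sum_congr rfl h4, Finset.sum_const, Finset.card_range, smul_eq_mul]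
  ring

lemma count_all (m : ℕ) (hm : 1 ≤ m) : ∀ d : ℕ,
    ((Finset.range ((2*m)^d) ×ˢ Finset.range ((2*m)^d)).filter
      (fun p => ∀ i < d, m ≤ digit (2*m) p.1 i + digit (2*m) p.2 i ∧
        digit (2*m) p.1 i + digit (2*m) p.2 i < 3*m)).card = (3*m^2)^d := by
  intro d
  induction d with
  | zero => simp
  | succ d ih =>
    set q := 2*m with hq
    have hq0 : 0 < q := by omega
    have key : ((Finset.range (q^(d+1)) ×ˢ Finset.range (q^(d+1))).filter
        (fun p => ∀ i < d+1, m ≤ digit q p.1 i + digit q p.2 i ∧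
          digit q p.1 i + digit q p.2 i < 3*m)).card =
        (((Finset.range q ×ˢ Finset.range q).filter
            (fun p => m ≤ p.1 + p.2 ∧ p.1 + p.2 < 3*m)) ×ˢ
          ((Finset.range (q^d) ×ˢ Finset.range (q^d)).filter
            (fun p => ∀ i < d, m ≤ digit q p.1 i + digit q p.2 i ∧
              digit q p.1 i + digit q p.2 i < 3*m))).card := by
      apply Finset.card_bij'
        (i := fun p _ => ((p.1 % q, p.2 % q), (p.1 / q, p.2 / q)))
        (j := fun p _ => (p.1.1 + q * p.2.1, p.1.2 + q * p.2.2))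
      · intro p hp
        simp only [Finset.mem_filter, Finset.mem_product, Finset.mem_range] at hp ⊢
        obtain ⟨⟨hx, hy⟩, hcond⟩ := hp
        have h0 := hcond 0 (by omega)
        rw [digit_zero, digit_zero] at h0
        refine ⟨⟨⟨Nat.mod_lt _ hq0, Nat.mod_lt _ hq0⟩, h0⟩,
          ⟨Nat.div_lt_of_lt_mul (by rw [← pow_succ'] ; exact hx),
           Nat.div_lt_of_lt_mul (by rw [← pow_succ'] ; exact hy)⟩, ?_⟩
        intro i hi
        have := hcond (i+1) (by omega)
        rwa [digit_succ, digit_succ] at this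
      · intro p hp
        simp only [Finset.mem_filter, Finset.mem_product, Finset.mem_range] at hp ⊢
        obtain ⟨⟨a, b⟩, x, y⟩ := p
        obtain ⟨⟨⟨ha, hb⟩, hab⟩, ⟨hx, hy⟩, hcond⟩ := hp
        have hbound : ∀ a x : ℕ, a < q → x < q^d → a + q * x < q^(d+1) := by
          intro a x h1 h2
          calc a + q * x < q + q * x := by omega
          _ = q * (x + 1) := by ring
          _ ≤ q * q^d := by exact Nat.mul_le_mul_left q (by omega)
          _ = q^(d+1) := (pow_succ' q d).symm
        refine ⟨⟨hbound _ _ ha hx, hbound _ _ hb hy⟩, ?_⟩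
        intro i hi
        match i with
        | 0 =>
          rw [digit_zero, digit_zero, Nat.add_mul_mod_self_left, Nat.add_mul_mod_self_left,
            Nat.mod_eq_of_lt ha, Nat.mod_eq_of_lt hb]
          exact hab
        | Nat.succ j =>
          rw [digit_succ, digit_succ, Nat.add_mul_div_left _ _ hq0,
            Nat.add_mul_div_left _ _ hq0, Nat.div_eq_of_lt ha, Nat.div_eq_of_lt hb,
            Nat.zero_add, Nat.zero_add]
          exact hcond j (by omega)
      · intro p hp
        obtain ⟨x, y⟩ := p
        simp only [Prod.mk.injEq]
        exact ⟨Nat.mod_add_div x q, Nat.mod_add_div y q⟩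
      · intro p hp
        obtain ⟨⟨a, b⟩, x, y⟩ := p
        simp only [Finset.mem_filter, Finset.mem_product, Finset.mem_range] at hp
        obtain ⟨⟨⟨ha, hb⟩, _⟩, _⟩ := hp
        simp only [Prod.mk.injEq]
        constructor
        · constructor
          · rw [Nat.add_mul_mod_self_left, Nat.mod_eq_of_lt ha]
          · rw [Nat.add_mul_mod_self_left, Nat.mod_eq_of_lt hb]
        · constructor
          · rw [Nat.add_mul_div_left _ _ hq0, Nat.div_eq_of_lt ha, Nat.zero_add]
          · rw [Nat.add_mul_div_left _ _ hq0, Nat.div_eq_of_lt hb, Nat.zero_add]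
    rw [key, Finset.card_product, count_one m, ih, ← pow_succ']


/-- For even `q ≥ 2` and `d ≥ 1`, there exists `r` with `0 ≤ r ≤ d(q−1)²` such that the set
`A_r = {(x, y) ∈ {0,…,q^d−1}² : ‖π(x) − π(y)‖₂² = r, q/2 ≤ x_i + y_i < 3q/2 for all i < d}`
satisfies `#A_r ≥ (3q²/4)^d / (d(q−1)² + 1)`, and in particular `#A_r ≥ (dq²)⁻¹·(3q²/4)^d`. -/
theorem exists_large_sphere_slice (q d : ℕ) (hq : 2 ≤ q) (hq2 : Even q) (hd : 1 ≤ d) :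
    ∃ r : ℕ, r ≤ d * (q - 1) ^ 2 ∧
      (3 * (q : ℝ) ^ 2 / 4) ^ d / ((d : ℝ) * ((q : ℝ) - 1) ^ 2 + 1) ≤
        (((Finset.range (q ^ d) ×ˢ Finset.range (q ^ d)).filter
          (fun p => (∑ i ∈ Finset.range d,
              ((digit q p.1 i : ℤ) - (digit q p.2 i : ℤ)) ^ 2) = (r : ℤ) ∧
            ∀ i < d, (q : ℚ) / 2 ≤ (digit q p.1 i : ℚ) + (digit q p.2 i : ℚ) ∧
              (digit q p.1 i : ℚ) + (digit q p.2 i : ℚ) < 3 * q / 2)).card : ℝ) ∧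
      ((d : ℝ) * (q : ℝ) ^ 2)⁻¹ * (3 * (q : ℝ) ^ 2 / 4) ^ d ≤
        (((Finset.range (q ^ d) ×ˢ Finset.range (q ^ d)).filter
          (fun p => (∑ i ∈ Finset.range d,
              ((digit q p.1 i : ℤ) - (digit q p.2 i : ℤ)) ^ 2) = (r : ℤ) ∧
            ∀ i < d, (q : ℚ) / 2 ≤ (digit q p.1 i : ℚ) + (digit q p.2 i : ℚ) ∧
              (digit q p.1 i : ℚ) + (digit q p.2 i : ℚ) < 3 * q / 2)).card : ℝ) := by
  obtain ⟨m, hm⟩ := hq2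
  have hqm : q = 2 * m := by omega
  have hm1 : 1 ≤ m := by omega
  set N := d * (q - 1) ^ 2 + 1 with hN
  set S := (Finset.range (q ^ d) ×ˢ Finset.range (q ^ d)).filter
    (fun p => ∀ i < d, m ≤ digit q p.1 i + digit q p.2 i ∧
      digit q p.1 i + digit q p.2 i < 3 * m) with hS
  have hScard : S.card = (3 * m ^ 2) ^ d := by rw [hS]; rw [hqm]; exact count_all m hm1 d
  set f : ℕ × ℕ → ℕ := fun p =>
    (∑ i ∈ Finset.range d, ((digit q p.1 i : ℤ) - (digit q p.2 i : ℤ)) ^ 2).toNat with hf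
  have hsumnn : ∀ p : ℕ × ℕ,
      0 ≤ ∑ i ∈ Finset.range d, ((digit q p.1 i : ℤ) - (digit q p.2 i : ℤ)) ^ 2 :=
    fun p => Finset.sum_nonneg (fun i _ => sq_nonneg _)
  have hcast : ((d * (q - 1) ^ 2 : ℕ) : ℤ) = (d : ℤ) * ((q : ℤ) - 1) ^ 2 := by
    push_cast [Nat.cast_sub (by omega : 1 ≤ q)]; ring
  have hfmem : ∀ p ∈ S, f p ∈ Finset.range N := by
    intro p _
    simp only [Finset.mem_range, hf]
    have hb : ∑ i ∈ Finset.range d, ((digit q p.1 i : ℤ) - (digit q p.2 i : ℤ)) ^ 2 ≤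
        ((d * (q - 1) ^ 2 : ℕ) : ℤ) := by
      rw [hcast]
      calc ∑ i ∈ Finset.range d, ((digit q p.1 i : ℤ) - (digit q p.2 i : ℤ)) ^ 2
          ≤ (Finset.range d).card • ((q : ℤ) - 1) ^ 2 := by
            apply Finset.sum_le_card_nsmul
            intro i _
            have h1 : digit q p.1 i < q := digit_lt q p.1 i (by omega)
            have h2 : digit q p.2 i < q := digit_lt q p.2 i (by omega)
            apply sq_le_sq'
            · omega
            · omega
        _ = (d : ℤ) * ((q : ℤ) - 1) ^ 2 := by simp [nsmul_eq_mul]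
    have hnn := hsumnn p
    omega
  have hcardsum : S.card = ∑ r ∈ Finset.range N, (S.filter (fun p => f p = r)).card :=
    Finset.card_eq_sum_card_fiberwise hfmem
  obtain ⟨r, hrN, hrmax⟩ := Finset.exists_max_image (Finset.range N)
    (fun r => (S.filter (fun p => f p = r)).card) ⟨0, by simp [hN]⟩
  simp only [Finset.mem_range] at hrN
  have hpigeon : (3 * m ^ 2) ^ d ≤ N * (S.filter (fun p => f p = r)).card := by
    rw [← hScard, hcardsum]
    calc ∑ r' ∈ Finset.range N, (S.filter (fun p => f p = r')).card
        ≤ (Finset.range N).card • (S.filter (fun p => f p = r)).card :=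
          Finset.sum_le_card_nsmul _ _ _ hrmax
      _ = N * (S.filter (fun p => f p = r)).card := by
          rw [Finset.card_range, smul_eq_mul]
  have hA : ((Finset.range (q ^ d) ×ˢ Finset.range (q ^ d)).filter
      (fun p => (∑ i ∈ Finset.range d,
          ((digit q p.1 i : ℤ) - (digit q p.2 i : ℤ)) ^ 2) = (r : ℤ) ∧
        ∀ i < d, (q : ℚ) / 2 ≤ (digit q p.1 i : ℚ) + (digit q p.2 i : ℚ) ∧
          (digit q p.1 i : ℚ) + (digit q p.2 i : ℚ) < 3 * q / 2)) =
      S.filter (fun p => f p = r) := by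
    have hq2Q : (q : ℚ) / 2 = (m : ℚ) := by rw [hqm]; push_cast; ring
    have h3q2 : 3 * (q : ℚ) / 2 = ((3 * m : ℕ) : ℚ) := by rw [hqm]; push_cast; ring
    rw [hS, Finset.filter_filter]
    apply Finset.filter_congr
    intro p _
    constructor
    · rintro ⟨h1, h2⟩
      refine ⟨?_, ?_⟩
      · intro i hi
        obtain ⟨ha, hb⟩ := h2 i hi
        rw [hq2Q] at ha
        rw [h3q2] at hb
        exact ⟨by exact_mod_cast ha, by exact_mod_cast hb⟩
      · have : (∑ i ∈ Finset.range d,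
            ((digit q p.1 i : ℤ) - (digit q p.2 i : ℤ)) ^ 2).toNat = r := by
          rw [h1]; simp
        exact this
    · rintro ⟨h1, h2⟩
      refine ⟨?_, ?_⟩
      · have h2' : (∑ i ∈ Finset.range d,
            ((digit q p.1 i : ℤ) - (digit q p.2 i : ℤ)) ^ 2).toNat = r := h2
        rw [← h2', Int.toNat_of_nonneg (hsumnn p)]
      · intro i hi
        obtain ⟨ha, hb⟩ := h1 i hi
        rw [hq2Q, h3q2]
        exact ⟨by exact_mod_cast ha, by exact_mod_cast hb⟩
  have hNpos : (0 : ℝ) < (N : ℝ) := by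
    have : 0 < N := by omega
    exact_mod_cast this
  have hNc : ((N : ℕ) : ℝ) = (d : ℝ) * ((q : ℝ) - 1) ^ 2 + 1 := by
    rw [hN]; push_cast [Nat.cast_sub (by omega : 1 ≤ q)]; ring
  have hX : 3 * (q : ℝ) ^ 2 / 4 = ((3 * m ^ 2 : ℕ) : ℝ) := by
    rw [hqm]; push_cast; ring
  have hmain : (3 * (q : ℝ) ^ 2 / 4) ^ d / ((d : ℝ) * ((q : ℝ) - 1) ^ 2 + 1) ≤
      ((S.filter (fun p => f p = r)).card : ℝ) := by
    rw [hX, ← hNc, div_le_iff₀ hNpos]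
    have h1 := hpigeon
    rw [mul_comm N] at h1
    exact_mod_cast h1
  have hNle : ((N : ℕ) : ℝ) ≤ (d : ℝ) * (q : ℝ) ^ 2 := by
    have ha : q - 1 + 1 = q := by omega
    have h1 : 1 ≤ d * (2 * (q - 1) + 1) := by
      calc 1 = 1 * 1 := by ring
        _ ≤ d * (2 * (q - 1) + 1) := Nat.mul_le_mul hd (by omega)
    have hnat : N ≤ d * q ^ 2 := by
      calc N = d * (q - 1) ^ 2 + 1 := hN
        _ ≤ d * (q - 1) ^ 2 + d * (2 * (q - 1) + 1) := by omega
        _ = d * ((q - 1 + 1) ^ 2) := by ring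
        _ = d * q ^ 2 := by rw [ha]
    calc ((N : ℕ) : ℝ) ≤ ((d * q ^ 2 : ℕ) : ℝ) := Nat.cast_le.mpr hnat
      _ = (d : ℝ) * (q : ℝ) ^ 2 := by push_cast; ring
  have hsecond : ((d : ℝ) * (q : ℝ) ^ 2)⁻¹ * (3 * (q : ℝ) ^ 2 / 4) ^ d ≤
      ((S.filter (fun p => f p = r)).card : ℝ) := by
    have hXd0 : (0 : ℝ) ≤ (3 * (q : ℝ) ^ 2 / 4) ^ d := by positivity
    have h2 : (3 * (q : ℝ) ^ 2 / 4) ^ d / ((d : ℝ) * (q : ℝ) ^ 2) ≤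
        (3 * (q : ℝ) ^ 2 / 4) ^ d / ((N : ℕ) : ℝ) :=
      div_le_div_of_nonneg_left hXd0 hNpos hNle
    rw [inv_mul_eq_div]
    rw [hNc] at h2
    linarith
  exact ⟨r, by omega, by rw [hA]; exact hmain, by rw [hA]; exact hsecond⟩
end
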